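/- For every $(\varphi,\psi)\in\mathcal{A}$ and $|\xi|>0$, $E(\varphi,\psi)= -g|\xi|+\frac12\int_{-m}^{\ell}P'(\rho_0)\rho_0(\psi'+|\xi|\varphi)^2+g|\xi|\rho_0(\varphi-\psi)^2\;\ge\;-g|\xi|$. In particular $\inf_{\mathcal{A}}E\ge -g|\xi|$. -/

import Mathlib

open Set MeasureTheory

/-- Lower bound on the energy: for `(φ,ψ) ∈ 𝒜` (i.e. `½∫ρ₀(φ²+ψ²)=1`) and `|ξ| > 0`,
`E(φ,ψ) = -g|ξ| + ½∫ W(ψ'+|ξ|φ)² + g|ξ|ρ₀(φ-ψ)² ≥ -g|ξ|`, where `W = P'(ρ₀)ρ₀ ≥ 0`.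
In particular `inf_𝒜 E ≥ -g|ξ|`. -/
theorem energy_lower_bound
    (m ℓ g ξ : ℝ) (hm : 0 < m) (hℓ : 0 < ℓ) (hg : 0 < g) (hξ : 0 < ξ)
    (ρ0 W : ℝ → ℝ)
    (hW : ∀ x ∈ Ioo (-m) ℓ, 0 ≤ W x)
    (c C W' : ℝ) (hc : 0 < c)
    (hρbd : ∀ x ∈ Ioo (-m) ℓ, c ≤ ρ0 x ∧ ρ0 x ≤ C)
    (hWbd : ∀ x ∈ Ioo (-m) ℓ, W x ≤ W')
    (hρmeas : Measurable ρ0) (hWmeas : Measurable W)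
    (φ ψ : ℝ → ℝ)
    (hφ : ContinuousOn φ (Icc (-m) ℓ))
    (hψcont : ContinuousOn ψ (Icc (-m) ℓ)) (hψa : ψ (-m) = 0) (hψb : ψ ℓ = 0)
    (hψdiff : ∀ x ∈ Ioo (-m) ℓ, x ≠ 0 → DifferentiableAt ℝ ψ x)
    (hψ' : IntervalIntegrable (fun x => (deriv ψ x) ^ 2) MeasureTheory.volume (-m) ℓ)
    (hJ : (1 / 2) * (∫ x in (-m)..ℓ, ρ0 x * ((φ x) ^ 2 + (ψ x) ^ 2)) = 1) :
    ((1 / 2) * ∫ x in (-m)..ℓ,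
        (W x * (deriv ψ x + ξ * φ x) ^ 2 - 2 * g * ρ0 x * ξ * ψ x * φ x))
      = -(g * ξ) + (1 / 2) * ∫ x in (-m)..ℓ,
            (W x * (deriv ψ x + ξ * φ x) ^ 2 + g * ξ * ρ0 x * (φ x - ψ x) ^ 2)
    ∧ -(g * ξ) ≤ (1 / 2) * ∫ x in (-m)..ℓ,
        (W x * (deriv ψ x + ξ * φ x) ^ 2 - 2 * g * ρ0 x * ξ * ψ x * φ x) := by
  have hab : (-m : ℝ) ≤ ℓ := by linarith
  have h0mem : (0 : ℝ) ∈ Ioo (-m) ℓ := ⟨by linarith, hℓ⟩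
  have hW'0 : (0 : ℝ) ≤ W' := le_trans (hW 0 h0mem) (hWbd 0 h0mem)
  have hC0 : (0 : ℝ) ≤ C := le_trans hc.le (le_trans (hρbd 0 h0mem).1 (hρbd 0 h0mem).2)
  -- a.e. points of Ioc are in Ioo
  have haeb : ∀ᵐ x : ℝ, x ≠ ℓ := by
    refine MeasureTheory.ae_iff.2 ?_
    simpa using Real.volume_singleton (x := ℓ)
  have hmemIoo : ∀ x : ℝ, x ∈ Ioc (-m) ℓ → x ≠ ℓ → x ∈ Ioo (-m) ℓ := by
    intro x hx hne
    exact ⟨hx.1, lt_of_le_of_ne hx.2 hne⟩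
  -- measurability on the restricted measure
  set ν : Measure ℝ := volume.restrict (Ioc (-m) ℓ) with hν
  have hφaesm : AEStronglyMeasurable φ ν :=
    (hφ.mono Ioc_subset_Icc_self).aestronglyMeasurable measurableSet_Ioc
  have hψaesm : AEStronglyMeasurable ψ ν :=
    (hψcont.mono Ioc_subset_Icc_self).aestronglyMeasurable measurableSet_Ioc
  have hdaesm : AEStronglyMeasurable (deriv ψ) ν :=
    (measurable_deriv ψ).aestronglyMeasurable
  have haeb' : ∀ᵐ x ∂ν, x ≠ ℓ := ae_restrict_of_ae haeb
  have haemem : ∀ᵐ x ∂ν, x ∈ Ioc (-m) ℓ := ae_restrict_mem measurableSet_Ioc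
  -- helper: ρ0 * (continuous on Icc) is interval integrable
  have haux : ∀ h : ℝ → ℝ, ContinuousOn h (Icc (-m) ℓ) →
      IntervalIntegrable (fun x => ρ0 x * h x) volume (-m) ℓ := by
    intro h hh
    rw [intervalIntegrable_iff_integrableOn_Ioc_of_le hab]
    refine Integrable.mono' (g := fun x => C * |h x|)
      (MeasureTheory.IntegrableOn.mono_set ((hh.abs.integrableOn_Icc).const_mul C) Ioc_subset_Icc_self)
      (hρmeas.aestronglyMeasurable.mul
        ((hh.mono Ioc_subset_Icc_self).aestronglyMeasurable measurableSet_Ioc)) ?_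
    filter_upwards [haemem, haeb'] with x hx hne
    have hx' := hmemIoo x hx hne
    have h1 := (hρbd x hx').1
    have h2 := (hρbd x hx').2
    rw [Real.norm_eq_abs, abs_mul, abs_of_nonneg (le_trans hc.le h1)]
    exact mul_le_mul_of_nonneg_right h2 (abs_nonneg _)
  -- integrability of the main pieces
  have hI1 : IntervalIntegrable (fun x => W x * (deriv ψ x + ξ * φ x) ^ 2) volume (-m) ℓ := by
    rw [intervalIntegrable_iff_integrableOn_Ioc_of_le hab]
    have hφ2 : IntegrableOn (fun x => (φ x) ^ 2) (Ioc (-m) ℓ) volume :=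
      MeasureTheory.IntegrableOn.mono_set ((hφ.pow 2).integrableOn_Icc) Ioc_subset_Icc_self
    have hd2 : IntegrableOn (fun x => (deriv ψ x) ^ 2) (Ioc (-m) ℓ) volume :=
      (intervalIntegrable_iff_integrableOn_Ioc_of_le hab).1 hψ'
    have hgint : IntegrableOn
        (fun x => W' * (2 * (deriv ψ x) ^ 2 + 2 * ξ ^ 2 * (φ x) ^ 2)) (Ioc (-m) ℓ) volume :=
      (((hd2.const_mul 2).add (hφ2.const_mul (2 * ξ ^ 2))).const_mul W')
    refine Integrable.mono' hgint ?_ ?_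
    · have hs : AEStronglyMeasurable (fun x => deriv ψ x + ξ * φ x) ν :=
        hdaesm.add (hφaesm.const_mul ξ)
      have : AEStronglyMeasurable
          (fun x => W x * ((deriv ψ x + ξ * φ x) * (deriv ψ x + ξ * φ x))) ν :=
        hWmeas.aestronglyMeasurable.mul (hs.mul hs)
      refine this.congr ?_
      filter_upwards with x
      ring
    · filter_upwards [haemem, haeb'] with x hx hne
      have hx' := hmemIoo x hx hne
      have h1 := hW x hx'
      have h2 := hWbd x hx'
      have h0 : 0 ≤ W x * (deriv ψ x + ξ * φ x) ^ 2 := mul_nonneg h1 (sq_nonneg _)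
      rw [Real.norm_eq_abs, abs_of_nonneg h0]
      nlinarith [mul_nonneg hW'0 (sq_nonneg (deriv ψ x - ξ * φ x)),
        mul_nonneg (sub_nonneg.2 h2) (sq_nonneg (deriv ψ x + ξ * φ x))]
  have hI3 : IntervalIntegrable (fun x => g * ξ * ρ0 x * (φ x - ψ x) ^ 2) volume (-m) ℓ := by
    have := (haux (fun x => (φ x - ψ x) ^ 2) ((hφ.sub hψcont).pow 2)).const_mul (g * ξ)
    refine this.congr ?_
    intro x _; beta_reduce
    ring
  have hI4 : IntervalIntegrable (fun x => ρ0 x * ((φ x) ^ 2 + (ψ x) ^ 2)) volume (-m) ℓ :=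
    haux (fun x => (φ x) ^ 2 + (ψ x) ^ 2) ((hφ.pow 2).add (hψcont.pow 2))
  have hI4' : IntervalIntegrable
      (fun x => g * ξ * (ρ0 x * ((φ x) ^ 2 + (ψ x) ^ 2))) volume (-m) ℓ :=
    hI4.const_mul (g * ξ)
  -- the key rewriting of the integral
  have key : (∫ x in (-m)..ℓ,
        (W x * (deriv ψ x + ξ * φ x) ^ 2 - 2 * g * ρ0 x * ξ * ψ x * φ x))
      = (∫ x in (-m)..ℓ,
          (W x * (deriv ψ x + ξ * φ x) ^ 2 + g * ξ * ρ0 x * (φ x - ψ x) ^ 2))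
        - g * ξ * (∫ x in (-m)..ℓ, ρ0 x * ((φ x) ^ 2 + (ψ x) ^ 2)) := by
    rw [← intervalIntegral.integral_const_mul,
      ← intervalIntegral.integral_sub (hI1.add hI3) hI4']
    apply intervalIntegral.integral_congr
    intro x _
    ring
  have hJ2 : (∫ x in (-m)..ℓ, ρ0 x * ((φ x) ^ 2 + (ψ x) ^ 2)) = 2 := by linarith
  -- nonnegativity of the middle integral
  have hmid : 0 ≤ ∫ x in (-m)..ℓ,
      (W x * (deriv ψ x + ξ * φ x) ^ 2 + g * ξ * ρ0 x * (φ x - ψ x) ^ 2) := by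
    rw [intervalIntegral.integral_of_le hab]
    refine setIntegral_nonneg_ae measurableSet_Ioc ?_
    filter_upwards [haeb] with x hne hx
    have hx' := hmemIoo x hx hne
    have h1 := hW x hx'
    have h2 := (hρbd x hx').1
    have hρ0 : 0 ≤ ρ0 x := le_trans hc.le h2
    have : 0 ≤ g * ξ * ρ0 x := by positivity
    exact add_nonneg (mul_nonneg h1 (sq_nonneg _)) (mul_nonneg this (sq_nonneg _))
  constructor
  · rw [key, hJ2]; ring
  · rw [key, hJ2]
    nlinarith [hmid]
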